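/- For 𝕜 = (k₁,...,k_r,k_{r+1}) ∈ ℕ^r × ℕ₀ with all k_j ≥ 1 for j ≤ r, the function t ↦ Λ_𝕜(1 − e^{−t}) satisfies Λ_𝕜(1−e^{−t}) = O(t^r) as t → 0⁺. -/

import Mathlib

open scoped BigOperators NNReal ENNReal

/-- `Λ_{(k₁,…,k_r,k')}(z) = ∑_{m₁,…,m_r ≥ 1} z^{m₁+⋯+m_r} / (m₁^{k₁}⋯m_r^{k_r}(m₁+⋯+m_r)^{k'})`. -/
noncomputable def Lam (r : ℕ) (k : Fin r → ℕ) (k' : ℕ) (z : ℂ) : ℂ :=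
  ∑' m : Fin r → ℕ+,
    z ^ (∑ j, (m j : ℕ)) /
      ((∏ j, ((m j : ℕ) : ℂ) ^ (k j)) * (((∑ j, (m j : ℕ)) : ℕ) : ℂ) ^ k')

lemma tsum_pi_prod : ∀ (r : ℕ) (f : Fin r → ℕ+ → ℝ≥0∞),
    ∑' m : Fin r → ℕ+, ∏ j, f j (m j) = ∏ j, ∑' n : ℕ+, f j n := by
  intro r
  induction r with
  | zero =>
    intro f
    simp
  | succ r ih =>
    intro f
    rw [← (Fin.consEquiv (fun _ : Fin (r+1) => ℕ+)).tsum_eq]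
    rw [ENNReal.tsum_prod']
    simp only [Fin.consEquiv_apply]
    have : ∀ (a : ℕ+) (b : Fin r → ℕ+),
        ∏ j, f j ((Fin.cons a b : ∀ _ : Fin (r+1), ℕ+) j)
          = f 0 a * ∏ j, f j.succ (b j) := by
      intro a b
      rw [Fin.prod_univ_succ]
      simp
    simp_rw [this, ENNReal.tsum_mul_left, ENNReal.tsum_mul_right, ih]
    rw [Fin.prod_univ_succ]

lemma tsum_pnat_geom (w : ℝ≥0∞) : ∑' n : ℕ+, w ^ (n : ℕ) ≤ w * (1 - w)⁻¹ := by
  have h1 : ∑' n : ℕ+, w ^ (n : ℕ) = ∑' n : ℕ, w ^ (n + 1) := by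
    rw [← Equiv.pnatEquivNat.symm.tsum_eq (fun n : ℕ+ => w ^ (n : ℕ))]
    simp [Equiv.pnatEquivNat]
  rw [h1]
  simp_rw [pow_succ]
  rw [ENNReal.tsum_mul_right, ENNReal.tsum_geometric, mul_comm]

lemma norm_Lam_le (r : ℕ) (k : Fin r → ℕ) (k' : ℕ) {x : ℝ} (hx0 : 0 ≤ x) (hx1 : x < 1) :
    ‖Lam r k k' (x : ℂ)‖ ≤ (x / (1 - x)) ^ r := by
  set f : (Fin r → ℕ+) → ℂ := fun m =>
    (x : ℂ) ^ (∑ j, (m j : ℕ)) /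
      ((∏ j, ((m j : ℕ) : ℂ) ^ (k j)) * (((∑ j, (m j : ℕ)) : ℕ) : ℂ) ^ k') with hf
  set g : (Fin r → ℕ+) → ℝ≥0 := fun m => ‖f m‖₊ with hg
  have key : ∀ m : Fin r → ℕ+,
      (g m : ℝ≥0∞) ≤ ∏ j, (‖(x : ℂ)‖₊ : ℝ≥0∞) ^ (m j : ℕ) := by
    intro m
    have hden : (∏ j, ((m j : ℕ) : ℂ) ^ (k j)) * (((∑ j, (m j : ℕ)) : ℕ) : ℂ) ^ k'
        = (((∏ j, (m j : ℕ) ^ (k j)) * (∑ j, (m j : ℕ)) ^ k' : ℕ) : ℂ) := by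
      push_cast
      ring
    set N : ℕ := (∏ j, (m j : ℕ) ^ (k j)) * (∑ j, (m j : ℕ)) ^ k' with hN
    have h1 : g m = ‖(x : ℂ) ^ (∑ j, (m j : ℕ))‖₊ / (N : ℝ≥0) := by
      rw [hg]
      simp only [hf, hden]
      rw [nnnorm_div]
      congr 1
      simp
    have h2 : ‖(x : ℂ) ^ (∑ j, (m j : ℕ))‖₊ / (N : ℝ≥0)
        ≤ ‖(x : ℂ) ^ (∑ j, (m j : ℕ))‖₊ := by
      rcases Nat.eq_zero_or_pos N with h | h
      · simp [h]
      · exact div_le_self zero_le (by exact_mod_cast h)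
    have h3 : ‖(x : ℂ) ^ (∑ j, (m j : ℕ))‖₊ = ∏ j, ‖(x : ℂ)‖₊ ^ (m j : ℕ) := by
      rw [nnnorm_pow, ← Finset.prod_pow_eq_pow_sum]
    rw [h1]
    calc ((‖(x : ℂ) ^ (∑ j, (m j : ℕ))‖₊ / (N : ℝ≥0) : ℝ≥0) : ℝ≥0∞)
        ≤ ((‖(x : ℂ) ^ (∑ j, (m j : ℕ))‖₊ : ℝ≥0) : ℝ≥0∞) := by exact_mod_cast h2
      _ = ∏ j, (‖(x : ℂ)‖₊ : ℝ≥0∞) ^ (m j : ℕ) := by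
          rw [h3]; push_cast; rfl
  have hw : (‖(x : ℂ)‖₊ : ℝ≥0∞) = ENNReal.ofReal x := by
    rw [← enorm_eq_nnnorm, ← ofReal_norm, Complex.norm_real, Real.norm_of_nonneg hx0]
  have h1x : (0:ℝ) < 1 - x := by linarith
  have hgeo : ∑' n : ℕ+, (‖(x : ℂ)‖₊ : ℝ≥0∞) ^ (n : ℕ) ≤ ENNReal.ofReal (x / (1 - x)) := by
    refine (tsum_pnat_geom _).trans_eq ?_
    rw [hw, ← ENNReal.ofReal_one, ← ENNReal.ofReal_sub 1 hx0,
      ENNReal.ofReal_div_of_pos h1x, div_eq_mul_inv]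
  have main : ∑' m, (g m : ℝ≥0∞) ≤ (ENNReal.ofReal (x / (1 - x))) ^ r := by
    calc ∑' m, (g m : ℝ≥0∞) ≤ ∑' m : Fin r → ℕ+, ∏ j, (‖(x : ℂ)‖₊ : ℝ≥0∞) ^ (m j : ℕ) :=
          ENNReal.tsum_le_tsum key
      _ = ∏ _j : Fin r, ∑' n : ℕ+, (‖(x : ℂ)‖₊ : ℝ≥0∞) ^ (n : ℕ) := tsum_pi_prod r (fun _ n => (‖(x : ℂ)‖₊ : ℝ≥0∞) ^ (n : ℕ))
      _ ≤ ∏ _j : Fin r, ENNReal.ofReal (x / (1 - x)) :=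
          Finset.prod_le_prod' (fun j _ => hgeo)
      _ = _ := by simp [Finset.prod_const]
  have hfin : ∑' m, (g m : ℝ≥0∞) ≠ ⊤ :=
    (main.trans_lt (ENNReal.pow_lt_top ENNReal.ofReal_lt_top)).ne
  have hsg : Summable g := ENNReal.tsum_coe_ne_top_iff_summable.mp hfin
  have hfinal : (‖∑' m, f m‖₊ : ℝ≥0∞) ≤ (ENNReal.ofReal (x / (1 - x))) ^ r := by
    calc (‖∑' m, f m‖₊ : ℝ≥0∞) ≤ ((∑' m, g m : ℝ≥0) : ℝ≥0∞) :=
          ENNReal.coe_le_coe.mpr (nnnorm_tsum_le hsg)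
      _ = ∑' m, (g m : ℝ≥0∞) := ENNReal.coe_tsum hsg
      _ ≤ _ := main
  have hxd : 0 ≤ x / (1 - x) := div_nonneg hx0 h1x.le
  rw [← ENNReal.ofReal_pow hxd, ← enorm_eq_nnnorm, ← ofReal_norm] at hfinal
  have := (ENNReal.ofReal_le_ofReal_iff (by positivity)).mp hfinal
  simpa [Lam, hf] using this

theorem stmt_16 (r : ℕ) (k : Fin r → ℕ) (hk : ∀ j, 1 ≤ k j) (k' : ℕ) :
    (fun t : ℝ => Lam r k k' (1 - Real.exp (-t))) =O[nhdsWithin 0 (Set.Ioi 0)]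
      fun t : ℝ => (t : ℂ) ^ r := by
  have hbound : ∀ t ∈ Set.Ioi (0:ℝ),
      ‖Lam r k k' (1 - Real.exp (-t))‖ ≤ 1 * ‖(Real.exp t - 1) ^ r‖ := by
    intro t ht
    have ht : (0:ℝ) < t := ht
    have he1 : Real.exp (-t) ≤ 1 := Real.exp_le_one_iff.mpr (by linarith)
    have he0 : (0:ℝ) < Real.exp (-t) := Real.exp_pos _
    have hx0 : (0:ℝ) ≤ 1 - Real.exp (-t) := by linarith
    have hx1 : (1:ℝ) - Real.exp (-t) < 1 := by linarith
    have hc : (1 - (Real.exp (-t) : ℂ)) = (((1 - Real.exp (-t) : ℝ)) : ℂ) := by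
      push_cast; ring
    have heq : (1 - Real.exp (-t)) / (1 - (1 - Real.exp (-t))) = Real.exp t - 1 := by
      have h : (1:ℝ) - (1 - Real.exp (-t)) = Real.exp (-t) := by ring
      rw [h, div_eq_iff he0.ne', Real.exp_neg]
      field_simp
    have hexp : 0 ≤ Real.exp t - 1 := by
      have := Real.add_one_le_exp t; linarith
    rw [hc, one_mul, Real.norm_of_nonneg (by positivity)]
    calc ‖Lam r k k' (((1 - Real.exp (-t) : ℝ)) : ℂ)‖
        ≤ ((1 - Real.exp (-t)) / (1 - (1 - Real.exp (-t)))) ^ r :=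
          norm_Lam_le r k k' hx0 hx1
      _ = (Real.exp t - 1) ^ r := by rw [heq]
  have h1 : (fun t : ℝ => Lam r k k' (1 - Real.exp (-t)))
      =O[nhdsWithin 0 (Set.Ioi 0)] fun t : ℝ => (Real.exp t - 1) ^ r :=
    Asymptotics.IsBigO.of_bound 1 (Filter.eventually_of_mem self_mem_nhdsWithin hbound)
  have h2 : (fun t : ℝ => Real.exp t - 1) =O[nhds 0] (fun t : ℝ => t) := by
    have := (Real.hasDerivAt_exp 0).isBigO_sub
    simpa using this
  have h3 : (fun t : ℝ => (Real.exp t - 1) ^ r)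
      =O[nhdsWithin 0 (Set.Ioi 0)] fun t : ℝ => t ^ r :=
    ((h2.pow r).mono nhdsWithin_le_nhds)
  have h4 : (fun t : ℝ => t ^ r) =O[nhdsWithin 0 (Set.Ioi 0)] fun t : ℝ => (t : ℂ) ^ r := by
    apply Asymptotics.isBigO_of_le
    intro x
    simp [norm_pow, Complex.norm_real]
  exact h1.trans (h3.trans h4)
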